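/- Let q, r be integers and suppose the polynomial x³ − q x − r has a real root β > 1 while its other two complex roots both have modulus strictly less than 1. Then q = 1 and r = 1 (so β is the root of x³ − x − 1, the smallest Pisot number). -/

import Mathlib

open Polynomial

/-- If `x³ - q x - r` (for integers `q, r`) has a real root `β > 1` and its other two
complex roots both have modulus less than `1`, then `q = 1` and `r = 1`, i.e. `β` is
the smallest Pisot number, the root of `x³ - x - 1`. -/
theorem stmt_13 (q r : ℤ) (β : ℝ) (hβ : 1 < β)
    (hroot : (β : ℂ) ∈ (X ^ 3 - C (q : ℂ) * X - C (r : ℂ)).roots)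
    (hothers : ∀ z ∈ ((X ^ 3 - C (q : ℂ) * X - C (r : ℂ)).roots).erase (β : ℂ),
      ‖z‖ < 1) :
    q = 1 ∧ r = 1 := by
  set P : ℂ[X] := X ^ 3 - C (q : ℂ) * X - C (r : ℂ) with hPdef
  have hb0 : (0:ℝ) < β := by linarith
  have hmonic : P.Monic := by
    have h : P = X ^ 3 - (C (q:ℂ) * X + C (r:ℂ)) := by rw [hPdef]; ring
    have h1 : (C (q:ℂ) * X + C (r:ℂ)).degree ≤ 1 := by compute_degree
    rw [h]
    exact monic_X_pow_sub (lt_of_le_of_lt h1 (by norm_num))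
  have hdeg : P.natDegree = 3 := by rw [hPdef]; compute_degree!
  have hcard : Multiset.card P.roots = 3 := by
    rw [← hdeg]; exact splits_iff_card_roots.mp (IsAlgClosed.splits P)
  have hcard2 : Multiset.card (P.roots.erase (β:ℂ)) = 2 := by
    rw [Multiset.card_erase_of_mem hroot, hcard]; rfl
  obtain ⟨z1, z2, hz⟩ := Multiset.card_eq_two.mp hcard2
  have hz1 : ‖z1‖ < 1 := hothers z1 (by rw [hz]; simp)
  have hz2 : ‖z2‖ < 1 := hothers z2 (by rw [hz]; simp)
  have hroots : P.roots = (β:ℂ) ::ₘ {z1, z2} := by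
    rw [← hz, Multiset.cons_erase hroot]
  have hprod : P = (X - C (β:ℂ)) * ((X - C z1) * (X - C z2)) := by
    have h := (prod_multiset_X_sub_C_of_monic_of_roots_card_eq hmonic (hcard.trans hdeg.symm)).symm
    rw [hroots] at h
    simpa [Multiset.map_cons, Multiset.prod_cons, mul_assoc] using h
  have e0 := congrArg (eval 0) hprod
  have e1 := congrArg (eval 1) hprod
  have e2 := congrArg (eval (-1)) hprod
  simp only [hPdef, eval_sub, eval_mul, eval_pow, eval_X, eval_C] at e0 e1 e2
  clear_value P
  -- Vieta
  have hr : (r:ℂ) = (β:ℂ) * (z1 * z2) := by linear_combination -e0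
  have hs : z1 + z2 = -(β:ℂ) := by
    linear_combination (1/2 : ℂ) * e1 + (1/2 : ℂ) * e2 - e0
  have hq : (q:ℂ) = (β:ℂ)^2 - z1 * z2 := by
    linear_combination -e1 + ((1:ℂ) - (β:ℂ)) * hs - hr
  -- go real
  set p : ℝ := β^2 - q with hpdef
  clear_value p
  have hpR : z1 * z2 = (p : ℂ) := by rw [hpdef]; push_cast; linear_combination hq
  have hp1 : |p| < 1 := by
    have h : ‖z1 * z2‖ < 1 := by
      rw [norm_mul]
      nlinarith [norm_nonneg z1, norm_nonneg z2]
    rwa [hpR, Complex.norm_real, Real.norm_eq_abs] at h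
  have hp1' := abs_lt.mp hp1
  have hrR : (r:ℝ) = β * p := by
    have h : (r:ℂ) = ((β * p : ℝ) : ℂ) := by rw [hr, hpR]; push_cast; ring
    exact_mod_cast h
  have hβ2 : β < 2 := by
    have h : ‖z1 + z2‖ < 2 := by
      calc ‖z1 + z2‖ ≤ ‖z1‖ + ‖z2‖ := norm_add_le _ _
        _ < 2 := by linarith
    rw [hs] at h
    simpa [abs_of_pos hb0] using h
  -- real/imag parts
  have hsre : z1.re + z2.re = -β := by
    have h := congrArg Complex.re hs; simpa using h
  have hsim : z2.im = -z1.im := by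
    have h := congrArg Complex.im hs; simp at h; linarith
  have hpre : z1.re * z2.re - z1.im * z2.im = p := by
    have h := congrArg Complex.re hpR; simpa [Complex.mul_re] using h
  have hpim : z1.re * z2.im + z1.im * z2.re = 0 := by
    have h := congrArg Complex.im hpR; simpa [Complex.mul_im] using h
  have ha1 : |z1.re| < 1 := lt_of_le_of_lt (Complex.abs_re_le_norm z1) hz1
  have ha2 : |z2.re| < 1 := lt_of_le_of_lt (Complex.abs_re_le_norm z2) hz2
  have hkey : 0 < 1 - β + p := by
    rcases eq_or_ne z1.im 0 with him | him
    · have ha1' := abs_lt.mp ha1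
      have ha2' := abs_lt.mp ha2
      have him2 : z2.im = 0 := by rw [hsim, him, neg_zero]
      rw [him, him2] at hpre
      nlinarith [mul_pos (show (0:ℝ) < 1 + z1.re by linarith) (show (0:ℝ) < 1 + z2.re by linarith)]
    · have hre : z2.re = z1.re := by
        rw [hsim] at hpim
        have h : z1.im * (z2.re - z1.re) = 0 := by linear_combination hpim
        rcases mul_eq_zero.mp h with h' | h'
        · exact absurd h' him
        · linarith
      have him2 : 0 < z1.im ^ 2 := by positivity
      rw [hre] at hsre hpre
      rw [hsim] at hpre
      nlinarith [sq_nonneg (1 + z1.re)]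
  -- endgame
  have hrlt : (r:ℝ) < 2 := by
    rw [hrR]; nlinarith [mul_lt_mul_of_pos_left hp1'.2 hb0]
  have hrgt : (0:ℝ) < r := by
    rw [hrR]; exact mul_pos hb0 (by linarith)
  have hr1 : r = 1 := by
    have h2 : r < 2 := by exact_mod_cast hrlt
    have h0 : 0 < r := by exact_mod_cast hrgt
    omega
  have hβp : β * p = 1 := by
    have h := hrR; rw [hr1] at h; push_cast at h; linarith
  have hβsq : β ^ 2 < β + 1 := by
    nlinarith [mul_pos hb0 (show (0:ℝ) < p - (β - 1) by linarith)]
  have hqR : (q:ℝ) = β^2 - p := by rw [hpdef]; ring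
  have hqgt : (0:ℝ) < q := by rw [hqR]; nlinarith [sq_nonneg (β - 1)]
  have hqlt : (q:ℝ) < 2 := by rw [hqR]; linarith
  have hq1 : q = 1 := by
    have h2 : q < 2 := by exact_mod_cast hqlt
    have h0 : 0 < q := by exact_mod_cast hqgt
    omega
  exact ⟨hq1, hr1⟩
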